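/- arXiv:1502.07639 — 2 statements merged into one kernel-verified Lean document; each statement's English description precedes it below -/
import Mathlib

section
/- Let b be a behavior with a sequential witness μ. Then there exists a canonical behavior b_c such that b ≡obs b_c and, for every position i, the i-th element of b is a deq(NULL) event if and only if the i-th element of b_c is a deq(NULL) event. -/
inductive QAction : Type
  | enq : ℕ → QAction
  | deq : Option ℕ → QAction
  deriving DecidableEq

structure QEvent : Type where
  uid : ℕ
  act : QAction
  deriving DecidableEq

def QEvent.isEnq : QEvent → Bool
  | ⟨_, QAction.enq _⟩ => true
  | _ => false

def QEvent.isDeq : QEvent → Bool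
  | ⟨_, QAction.deq _⟩ => true
  | _ => false

abbrev Behavior := List QEvent

/-- One step of the queue LTS. -/
inductive QStep : List ℕ → QAction → List ℕ → Prop
  | enq (q : List ℕ) (x : ℕ) : QStep q (QAction.enq x) (q ++ [x])
  | deq (x : ℕ) (q : List ℕ) : QStep (x :: q) (QAction.deq (some x)) q
  | deqNull : QStep [] (QAction.deq none) []

/-- A behavior is the trace of a run of the queue LTS from the given state. -/
inductive LegalFrom : List ℕ → Behavior → Prop
  | nil (q : List ℕ) : LegalFrom q []
  | cons {q q' : List ℕ} {a : QAction} {rest : Behavior} (u : ℕ) :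
      QStep q a q' → LegalFrom q' rest → LegalFrom q (⟨u, a⟩ :: rest)

/-- A behavior is legal if it is the trace of a run of the queue LTS from ε. -/
def Legal (b : Behavior) : Prop := LegalFrom [] b

/-- `e` occurs strictly before `e'` in `b`. -/
def Precedes (b : Behavior) (e e' : QEvent) : Prop :=
  ∃ i j : ℕ, i < j ∧ b[i]? = some e ∧ b[j]? = some e'

/-- Observational equivalence: same subsequence of enqueue events and of dequeue events. -/
def ObsEquiv (b1 b2 : Behavior) : Prop :=
  b1.filter QEvent.isEnq = b2.filter QEvent.isEnq ∧
  b1.filter QEvent.isDeq = b2.filter QEvent.isDeq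

/-- Sequences consisting only of enqueue events. -/
inductive EnqStar : Behavior → Prop
  | nil : EnqStar []
  | cons (u x : ℕ) {rest : Behavior} : EnqStar rest → EnqStar (⟨u, QAction.enq x⟩ :: rest)

/-- Canonical behaviors: the language ((deq NULL)* · enq(x)·deq(x))* · (deq NULL)* · (enq(x))*. -/
inductive Canonical : Behavior → Prop
  | tail {rest : Behavior} : EnqStar rest → Canonical rest
  | deqNull (u : ℕ) {rest : Behavior} :
      Canonical rest → Canonical (⟨u, QAction.deq none⟩ :: rest)
  | pair (u v x : ℕ) {rest : Behavior} :
      Canonical rest → Canonical (⟨u, QAction.enq x⟩ :: ⟨v, QAction.deq (some x)⟩ :: rest)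

/-- `e` enqueues the same (non-NULL) value that `d` dequeues. -/
def SameVal (e d : QEvent) : Prop :=
  ∃ x, e.act = QAction.enq x ∧ d.act = QAction.deq (some x)

/-- A sequential witness for a behavior `b`. -/
structure SeqWitness (b : Behavior) (μ : QEvent → Option QEvent) : Prop where
  codom : ∀ d ∈ b, d.isDeq = true → ∀ e, μ d = some e → e ∈ b ∧ e.isEnq = true
  val : ∀ d ∈ b, d.isDeq = true → ∀ e, μ d = some e → SameVal e d
  null : ∀ d ∈ b, d.isDeq = true → (μ d = none ↔ d.act = QAction.deq none)
  inj : ∀ d ∈ b, ∀ d' ∈ b, d.isDeq = true → d'.isDeq = true →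
        ∀ e, μ d = some e → μ d' = some e → d = d'
  order : ∀ d ∈ b, d.isDeq = true → ∀ e, μ d = some e → Precedes b e d
  fifo : ∀ e ∈ b, e.isEnq = true → ∀ d' ∈ b, d'.isDeq = true → ∀ e',
         μ d' = some e' → Precedes b e e' →
         ∃ d ∈ b, d.isDeq = true ∧ μ d = some e ∧ Precedes b d d'
  empty : ∀ d ∈ b, d.isDeq = true → μ d = none →
          {e : QEvent | e ∈ b ∧ e.isEnq = true ∧ Precedes b e d}.ncard =
          {d' : QEvent | d' ∈ b ∧ d'.isDeq = true ∧ Precedes b d' d ∧ μ d' ≠ none}.ncard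

/-! ### Auxiliary definitions and lemmas -/

/-- Dequeues of a non-NULL value. -/
def isDeqS : QEvent → Bool
  | ⟨_, QAction.deq (some _)⟩ => true
  | _ => false

lemma isDeqS_isDeq {e : QEvent} (h : isDeqS e = true) : e.isDeq = true := by
  rcases e with ⟨u, a⟩
  rcases a with x | o
  · simp [isDeqS] at h
  · rfl

lemma isEnq_iff {e : QEvent} : e.isEnq = true ↔ ∃ x, e.act = QAction.enq x := by
  rcases e with ⟨u, a⟩; rcases a with x | o <;> simp [QEvent.isEnq]

lemma isDeq_iff {e : QEvent} : e.isDeq = true ↔ ∃ o, e.act = QAction.deq o := by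
  rcases e with ⟨u, a⟩; rcases a with x | o <;> simp [QEvent.isDeq]

lemma isDeqS_iff {e : QEvent} : isDeqS e = true ↔ ∃ x, e.act = QAction.deq (some x) := by
  rcases e with ⟨u, a⟩
  rcases a with x | o
  · simp [isDeqS]
  · rcases o with _ | x <;> simp [isDeqS]

lemma isEnq_eq_not_isDeq (e : QEvent) : e.isEnq = !e.isDeq := by
  rcases e with ⟨u, a⟩; rcases a with x | o <;> rfl

lemma isDeq_eq_not_isEnq (e : QEvent) : e.isDeq = !e.isEnq := by
  rcases e with ⟨u, a⟩; rcases a with x | o <;> rfl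

lemma isDeq_of_null {e : QEvent} (h : e.act = QAction.deq none) : e.isDeq = true :=
  isDeq_iff.mpr ⟨none, h⟩

lemma isDeqS_of_null {e : QEvent} (h : e.act = QAction.deq none) : isDeqS e = false := by
  rcases e with ⟨u, a⟩; cases h; rfl

lemma isDeqS_and_isDeq (a : QEvent) : (isDeqS a && QEvent.isDeq a) = isDeqS a := by
  rcases a with ⟨u, c⟩
  rcases c with x | o
  · rfl
  · rcases o with _ | x <;> rfl

lemma filter_deqS_deq (l : Behavior) :
    (l.filter QEvent.isDeq).filter isDeqS = l.filter isDeqS := by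
  rw [List.filter_filter]
  exact List.filter_congr (fun a _ => isDeqS_and_isDeq a)

lemma enq_deq_partition (t : Behavior) :
    (t.filter QEvent.isEnq).length + (t.filter QEvent.isDeq).length = t.length := by
  have h1 : t.filter QEvent.isDeq = t.filter (fun x => !QEvent.isEnq x) :=
    List.filter_congr (fun a _ => isDeq_eq_not_isEnq a)
  have h2 := (t.filter_append_perm QEvent.isEnq).length_eq
  rw [List.length_append] at h2
  rw [h1]; exact h2

/-! ### Precedes lemmas -/

lemma precedes_iff_decomp {b : Behavior} {x y : QEvent} :
    Precedes b x y ↔ ∃ t r, b = t ++ y :: r ∧ x ∈ t := by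
  constructor
  · rintro ⟨i, j, hij, hx, hy⟩
    rw [List.getElem?_eq_some_iff] at hx hy
    obtain ⟨hi, hxi⟩ := hx
    obtain ⟨hj, hyj⟩ := hy
    refine ⟨b.take j, b.drop (j + 1), ?_, ?_⟩
    · conv_lhs => rw [← List.take_append_drop j b]
      rw [List.drop_eq_getElem_cons hj, hyj]
    · have hi' : i < (b.take j).length := by
        rw [List.length_take]; omega
      have : (b.take j)[i] = x := by
        rw [List.getElem_take]; exact hxi
      exact this ▸ List.getElem_mem hi'
  · rintro ⟨t, r, rfl, hx⟩
    obtain ⟨i, hi, hxi⟩ := List.getElem_of_mem hx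
    refine ⟨i, t.length, hi, ?_, ?_⟩
    · rw [List.getElem?_append_left hi, List.getElem?_eq_getElem hi, hxi]
    · rw [List.getElem?_append_right le_rfl]
      simp

lemma idx_lt_of_precedes {b : Behavior} {x y : QEvent} (hnd : b.Nodup)
    (h : Precedes b x y) : b.idxOf x < b.idxOf y := by
  obtain ⟨i, j, hij, hx, hy⟩ := h
  rw [List.getElem?_eq_some_iff] at hx hy
  obtain ⟨hi, hxi⟩ := hx
  obtain ⟨hj, hyj⟩ := hy
  have hxm : x ∈ b := hxi ▸ List.getElem_mem hi
  have hym : y ∈ b := hyj ▸ List.getElem_mem hj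
  have e1 : b.idxOf x = i := by
    have h1 : b.idxOf x < b.length := List.idxOf_lt_length_iff.mpr hxm
    have h2 : b[b.idxOf x] = b[i] := by rw [List.getElem_idxOf h1, hxi]
    exact (List.Nodup.getElem_inj_iff hnd).mp h2
  have e2 : b.idxOf y = j := by
    have h1 : b.idxOf y < b.length := List.idxOf_lt_length_iff.mpr hym
    have h2 : b[b.idxOf y] = b[j] := by rw [List.getElem_idxOf h1, hyj]
    exact (List.Nodup.getElem_inj_iff hnd).mp h2
  omega

lemma precedes_of_idx_lt {b : Behavior} {x y : QEvent} (hx : x ∈ b) (hy : y ∈ b)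
    (h : b.idxOf x < b.idxOf y) : Precedes b x y := by
  have h1 : b.idxOf x < b.length := List.idxOf_lt_length_iff.mpr hx
  have h2 : b.idxOf y < b.length := List.idxOf_lt_length_iff.mpr hy
  exact ⟨b.idxOf x, b.idxOf y, h,
    by rw [List.getElem?_eq_getElem h1, List.getElem_idxOf h1],
    by rw [List.getElem?_eq_getElem h2, List.getElem_idxOf h2]⟩

lemma getElem_of_indexOf_eq {l : Behavior} {x : QEvent} (hx : x ∈ l) {j : ℕ}
    (h : l.idxOf x = j) : ∃ hj : j < l.length, l[j] = x := by
  subst h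
  exact ⟨List.idxOf_lt_length_iff.mpr hx, List.getElem_idxOf (List.idxOf_lt_length_iff.mpr hx)⟩

lemma precedes_irrefl {b : Behavior} {x : QEvent} (hnd : b.Nodup) :
    ¬ Precedes b x x := fun h => lt_irrefl _ (idx_lt_of_precedes hnd h)

lemma precedes_asymm {b : Behavior} {x y : QEvent} (hnd : b.Nodup)
    (h : Precedes b x y) : ¬ Precedes b y x := fun h' => by
  have := idx_lt_of_precedes hnd h
  have := idx_lt_of_precedes hnd h'
  omega

lemma precedes_total {b : Behavior} {x y : QEvent} (hx : x ∈ b) (hy : y ∈ b)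
    (hne : x ≠ y) : Precedes b x y ∨ Precedes b y x := by
  have h1 : b.idxOf x < b.length := List.idxOf_lt_length_iff.mpr hx
  have h2 : b.idxOf y < b.length := List.idxOf_lt_length_iff.mpr hy
  rcases lt_trichotomy (b.idxOf x) (b.idxOf y) with h | h | h
  · exact Or.inl (precedes_of_idx_lt hx hy h)
  · exfalso
    apply hne
    obtain ⟨_, e1⟩ := getElem_of_indexOf_eq hx h
    obtain ⟨_, e2⟩ := getElem_of_indexOf_eq hy rfl
    exact e1.symm.trans e2
  · exact Or.inr (precedes_of_idx_lt hy hx h)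

lemma sublist_decomp {l s : Behavior} (h : List.Sublist s l) :
    ∀ t r (x y : QEvent), s = t ++ y :: r → x ∈ t → ∃ T R, l = T ++ y :: R ∧ x ∈ T := by
  induction h with
  | slnil =>
    intro t r x y he hx
    exact absurd he (by cases t <;> simp)
  | cons a _ ih =>
    intro t r x y he hx
    obtain ⟨T, R, rfl, hxT⟩ := ih t r x y he hx
    exact ⟨a :: T, R, rfl, List.mem_cons_of_mem a hxT⟩
  | @cons_cons s' l' a hsub ih =>
    intro t r x y he hx
    cases t with
    | nil => simp at hx
    | cons c t' =>
      rw [List.cons_append] at he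
      injection he with hac hs
      subst hac
      rcases List.mem_cons.mp hx with rfl | hx'
      · have hy : y ∈ l' := hsub.mem (by rw [hs]; exact List.mem_append_right _ (List.mem_cons_self))
        obtain ⟨T', R, hl⟩ := List.append_of_mem hy
        exact ⟨x :: T', R, by rw [hl]; rfl, List.mem_cons_self⟩
      · obtain ⟨T, R, rfl, hxT⟩ := ih t' r x y hs hx'
        exact ⟨a :: T, R, rfl, List.mem_cons_of_mem a hxT⟩

lemma sublist_precedes {s l : Behavior} (h : List.Sublist s l) {x y : QEvent}
    (hp : Precedes s x y) : Precedes l x y := by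
  rw [precedes_iff_decomp] at hp ⊢
  obtain ⟨t, r, hs, hx⟩ := hp
  exact sublist_decomp h t r x y hs hx

lemma precedes_filter {l : Behavior} (p : QEvent → Bool) {j k : ℕ} (hjk : j < k)
    (hk : k < (l.filter p).length) :
    Precedes l (l.filter p)[j] (l.filter p)[k] := by
  apply sublist_precedes (l.filter_sublist (p := p))
  have hj : j < (l.filter p).length := lt_trans hjk hk
  exact ⟨j, k, hjk, List.getElem?_eq_getElem hj, List.getElem?_eq_getElem hk⟩

lemma nodup_indexOf_getElem {l : Behavior} (hnd : l.Nodup) {k : ℕ} (hk : k < l.length) :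
    l.idxOf l[k] = k := by
  have hm : l[k] ∈ l := List.getElem_mem hk
  have h1 : l.idxOf l[k] < l.length := List.idxOf_lt_length_iff.mpr hm
  exact (List.Nodup.getElem_inj_iff hnd).mp (List.getElem_idxOf h1)

lemma filter_idx_lt {l : Behavior} (hnd : l.Nodup) (p : QEvent → Bool) {x y : QEvent}
    (hx : x ∈ l.filter p) (hy : y ∈ l.filter p) (h : Precedes l x y) :
    (l.filter p).idxOf x < (l.filter p).idxOf y := by
  have hndf : (l.filter p).Nodup := hnd.filter p
  have hxy : x ≠ y := by
    rintro rfl; exact precedes_irrefl hnd h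
  have h1 : (l.filter p).idxOf x < (l.filter p).length := List.idxOf_lt_length_iff.mpr hx
  have h2 : (l.filter p).idxOf y < (l.filter p).length := List.idxOf_lt_length_iff.mpr hy
  rcases lt_trichotomy ((l.filter p).idxOf x) ((l.filter p).idxOf y) with hlt | heq | hgt
  · exact hlt
  · exfalso
    apply hxy
    obtain ⟨_, e1⟩ := getElem_of_indexOf_eq hx heq
    obtain ⟨_, e2⟩ := getElem_of_indexOf_eq hy rfl
    exact e1.symm.trans e2
  · exfalso
    have hp := precedes_filter p hgt h1
    rw [List.getElem_idxOf h1, List.getElem_idxOf h2] at hp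
    exact precedes_asymm hnd h hp

lemma split_unique {t' t r' r : Behavior} {d : QEvent}
    (h : t' ++ d :: r' = t ++ d :: r) (h1 : d ∉ t') (h2 : d ∉ t) : t' = t := by
  induction t' generalizing t with
  | nil =>
    cases t with
    | nil => rfl
    | cons a t =>
      exfalso
      apply h2
      have : d = a := by injection h
      rw [this]; exact List.mem_cons_self
  | cons a t' ih =>
    cases t with
    | nil =>
      exfalso
      apply h1
      have : a = d := by injection h
      rw [this]; exact List.mem_cons_self
    | cons c t =>
      have hac : a = c := by injection h
      have htl : t' ++ d :: r' = t ++ d :: r := by injection h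
      rw [hac, ih htl (fun hm => h1 (List.mem_cons_of_mem a hm))
        (fun hm => h2 (List.mem_cons_of_mem c hm))]

/-! ### The canonicalization function -/

def canon : Behavior → Behavior → Behavior
  | [], E => E
  | d :: D, E =>
    if d.act = QAction.deq none then d :: canon D E
    else
      match E with
      | [] => d :: canon D []
      | e :: E' => e :: d :: canon D E'

lemma canon_nil (E : Behavior) : canon [] E = E := rfl

lemma canon_null {d : QEvent} (h : d.act = QAction.deq none) (D E : Behavior) :
    canon (d :: D) E = d :: canon D E := by
  simp only [canon]; rw [if_pos h]

lemma canon_nonnull_nil {d : QEvent} (h : ¬ d.act = QAction.deq none) (D : Behavior) :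
    canon (d :: D) [] = d :: canon D [] := by
  simp only [canon]; rw [if_neg h]

lemma canon_nonnull_cons {d : QEvent} (h : ¬ d.act = QAction.deq none) (D : Behavior)
    (e : QEvent) (E' : Behavior) :
    canon (d :: D) (e :: E') = e :: d :: canon D E' := by
  simp only [canon]; rw [if_neg h]

lemma canon_filter_enq : ∀ (D E : Behavior), (∀ d ∈ D, d.isDeq = true) →
    (∀ e ∈ E, e.isEnq = true) → (canon D E).filter QEvent.isEnq = E := by
  intro D
  induction D with
  | nil =>
    intro E _ hE
    rw [canon_nil]
    exact List.filter_eq_self.mpr hE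
  | cons d D ih =>
    intro E hD hE
    have hdd : d.isDeq = true := hD d (List.mem_cons_self)
    have hde : d.isEnq = false := by rw [isEnq_eq_not_isDeq, hdd]; rfl
    have hD' : ∀ x ∈ D, x.isDeq = true := fun x hx => hD x (List.mem_cons_of_mem d hx)
    by_cases h : d.act = QAction.deq none
    · rw [canon_null h, List.filter_cons_of_neg (by simp [hde])]
      exact ih E hD' hE
    · cases E with
      | nil =>
        rw [canon_nonnull_nil h, List.filter_cons_of_neg (by simp [hde])]
        exact ih [] hD' (by simp)
      | cons e E' =>
        have hee : e.isEnq = true := hE e (List.mem_cons_self)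
        rw [canon_nonnull_cons h, List.filter_cons_of_pos (by simp [hee]),
          List.filter_cons_of_neg (by simp [hde])]
        rw [ih E' hD' (fun x hx => hE x (List.mem_cons_of_mem e hx))]

lemma canon_filter_deq : ∀ (D E : Behavior), (∀ d ∈ D, d.isDeq = true) →
    (∀ e ∈ E, e.isEnq = true) → (canon D E).filter QEvent.isDeq = D := by
  intro D
  induction D with
  | nil =>
    intro E _ hE
    rw [canon_nil]
    apply List.filter_eq_nil_iff.mpr
    intro e he
    rw [isDeq_eq_not_isEnq, hE e he]
    simp
  | cons d D ih =>
    intro E hD hE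
    have hdd : d.isDeq = true := hD d (List.mem_cons_self)
    have hD' : ∀ x ∈ D, x.isDeq = true := fun x hx => hD x (List.mem_cons_of_mem d hx)
    by_cases h : d.act = QAction.deq none
    · rw [canon_null h, List.filter_cons_of_pos (by simp [hdd])]
      rw [ih E hD' hE]
    · cases E with
      | nil =>
        rw [canon_nonnull_nil h, List.filter_cons_of_pos (by simp [hdd])]
        rw [ih [] hD' (by simp)]
      | cons e E' =>
        have hee : e.isEnq = true := hE e (List.mem_cons_self)
        have hed : e.isDeq = false := by rw [isDeq_eq_not_isEnq, hee]; rfl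
        rw [canon_nonnull_cons h, List.filter_cons_of_neg (by simp [hed]),
          List.filter_cons_of_pos (by simp [hdd])]
        rw [ih E' hD' (fun x hx => hE x (List.mem_cons_of_mem e hx))]

lemma canon_perm : ∀ (D E : Behavior), List.Perm (canon D E) (D ++ E) := by
  intro D
  induction D with
  | nil => intro E; rw [canon_nil]; simp
  | cons d D ih =>
    intro E
    by_cases h : d.act = QAction.deq none
    · rw [canon_null h]
      exact List.Perm.cons d (ih E)
    · cases E with
      | nil =>
        rw [canon_nonnull_nil h]
        exact List.Perm.cons d (ih [])
      | cons e E' =>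
        rw [canon_nonnull_cons h]
        exact (List.Perm.cons e (List.Perm.cons d (ih E'))).trans
          (List.perm_middle (a := e) (l₁ := d :: D) (l₂ := E')).symm

lemma enqStar_of_all {E : Behavior} (hE : ∀ e ∈ E, e.isEnq = true) : EnqStar E := by
  induction E with
  | nil => exact EnqStar.nil
  | cons e E ih =>
    obtain ⟨x, hx⟩ := isEnq_iff.mp (hE e (List.mem_cons_self))
    rcases e with ⟨u, a⟩
    cases hx
    exact EnqStar.cons u x (ih (fun y hy => hE y (List.mem_cons_of_mem _ hy)))

lemma canon_canonical : ∀ (D E : Behavior), (∀ d ∈ D, d.isDeq = true) →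
    (∀ e ∈ E, e.isEnq = true) →
    (∀ k (hk : k < (D.filter isDeqS).length),
      ∃ hk' : k < E.length, SameVal (E[k]'hk') ((D.filter isDeqS)[k]'hk)) →
    Canonical (canon D E) := by
  intro D
  induction D with
  | nil =>
    intro E _ hE _
    rw [canon_nil]
    exact Canonical.tail (enqStar_of_all hE)
  | cons d D ih =>
    intro E hD hE HM
    have hdd : d.isDeq = true := hD d (List.mem_cons_self)
    have hD' : ∀ x ∈ D, x.isDeq = true := fun x hx => hD x (List.mem_cons_of_mem d hx)
    by_cases h : d.act = QAction.deq none
    · have hfs : (d :: D).filter isDeqS = D.filter isDeqS := by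
        rw [List.filter_cons_of_neg (by simp [isDeqS_of_null h])]
      rw [canon_null h]
      rcases d with ⟨u, a⟩
      cases h
      exact Canonical.deqNull u (ih E hD' hE (by rw [← hfs]; exact HM))
    · obtain ⟨o, ho⟩ := isDeq_iff.mp hdd
      have hds : isDeqS d = true := by
        apply isDeqS_iff.mpr
        rcases o with _ | x
        · exact absurd ho h
        · exact ⟨x, ho⟩
      have hfs : (d :: D).filter isDeqS = d :: D.filter isDeqS := by
        rw [List.filter_cons_of_pos (by simp [hds])]
      have h0 : 0 < ((d :: D).filter isDeqS).length := by rw [hfs]; simp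
      obtain ⟨h0', hsv⟩ := HM 0 h0
      cases E with
      | nil => exact absurd h0' (by simp)
      | cons e E' =>
        simp only [hfs, List.getElem_cons_zero] at hsv
        obtain ⟨x, hex, hdx⟩ : ∃ x, e.act = QAction.enq x ∧ d.act = QAction.deq (some x) := hsv
        rw [canon_nonnull_cons h]
        rcases e with ⟨u, ea⟩
        rcases d with ⟨v, da⟩
        cases hex
        cases hdx
        apply Canonical.pair u v x
        apply ih E' hD' (fun y hy => hE y (List.mem_cons_of_mem _ hy))
        intro k hk
        have hk1 : k + 1 < ((⟨v, QAction.deq (some x)⟩ :: D).filter isDeqS).length := by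
          rw [hfs, List.length_cons]; omega
        obtain ⟨hk'', hsv'⟩ := HM (k + 1) hk1
        simp only [hfs, List.getElem_cons_succ] at hsv'
        exact ⟨by simpa using hk'', hsv'⟩

lemma canon_split : ∀ (D₁ : Behavior) (d : QEvent) (D₂ E : Behavior),
    (∀ x ∈ D₁, x.isDeq = true) → d.act = QAction.deq none →
    (D₁.filter isDeqS).length ≤ E.length →
    ∃ C R, canon (D₁ ++ d :: D₂) E = C ++ d :: R ∧
      C.length = D₁.length + (D₁.filter isDeqS).length := by
  intro D₁
  induction D₁ with
  | nil =>
    intro d D₂ E _ hd _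
    rw [List.nil_append, canon_null hd]
    exact ⟨[], canon D₂ E, rfl, rfl⟩
  | cons a D₁ ih =>
    intro d D₂ E hD hd hlen
    have haD : a.isDeq = true := hD a (List.mem_cons_self)
    have hD' : ∀ x ∈ D₁, x.isDeq = true := fun x hx => hD x (List.mem_cons_of_mem a hx)
    by_cases h : a.act = QAction.deq none
    · have hfs : (a :: D₁).filter isDeqS = D₁.filter isDeqS := by
        rw [List.filter_cons_of_neg (by simp [isDeqS_of_null h])]
      rw [hfs] at hlen
      rw [List.cons_append, canon_null h]
      obtain ⟨C, R, hc, hC⟩ := ih d D₂ E hD' hd hlen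
      exact ⟨a :: C, R, by rw [hc]; rfl, by rw [List.length_cons, hC, hfs, List.length_cons]; omega⟩
    · obtain ⟨o, ho⟩ := isDeq_iff.mp haD
      have hds : isDeqS a = true := by
        apply isDeqS_iff.mpr
        rcases o with _ | x
        · exact absurd ho h
        · exact ⟨x, ho⟩
      have hfs : (a :: D₁).filter isDeqS = a :: D₁.filter isDeqS := by
        rw [List.filter_cons_of_pos (by simp [hds])]
      rw [hfs, List.length_cons] at hlen
      cases E with
      | nil => exact absurd hlen (by simp)
      | cons e E' =>
        rw [List.cons_append, canon_nonnull_cons h]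
        have hlen' : (D₁.filter isDeqS).length ≤ E'.length := by
          rw [List.length_cons] at hlen; omega
        obtain ⟨C, R, hc, hC⟩ := ih d D₂ E' hD' hd hlen'
        refine ⟨e :: a :: C, R, by rw [hc]; rfl, ?_⟩
        rw [List.length_cons, List.length_cons, hC, hfs, List.length_cons, List.length_cons]
        omega

/-! ### Key lemma: the k-th non-NULL dequeue is matched to the k-th enqueue -/

lemma key_lemma (b : Behavior) (μ : QEvent → Option QEvent)
    (hnd : b.Nodup) (hw : SeqWitness b μ) :
    ∀ k (hk : k < (b.filter isDeqS).length),
      ∃ hk' : k < (b.filter QEvent.isEnq).length,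
        μ ((b.filter isDeqS)[k]'hk) = some ((b.filter QEvent.isEnq)[k]'hk') := by
  set ds := b.filter isDeqS with hds
  set es := b.filter QEvent.isEnq with hes
  have hndds : ds.Nodup := hnd.filter _
  have hndes : es.Nodup := hnd.filter _
  set m : QEvent → QEvent := fun d => (μ d).getD d with hm
  have hdmem : ∀ d ∈ ds, d ∈ b ∧ isDeqS d = true := fun d hd => List.mem_filter.mp hd
  have hmu : ∀ d ∈ ds, μ d = some (m d) := by
    intro d hd
    obtain ⟨hdb, hdS⟩ := hdmem d hd
    obtain ⟨x, hx⟩ := isDeqS_iff.mp hdS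
    have hdd : d.isDeq = true := isDeqS_isDeq hdS
    have hne : μ d ≠ none := by
      rw [Ne, hw.null d hdb hdd, hx]
      simp
    obtain ⟨e, he⟩ := Option.ne_none_iff_exists'.mp hne
    rw [he]; rw [hm]; simp [he]
  have hmem_es : ∀ d ∈ ds, m d ∈ es := by
    intro d hd
    obtain ⟨hdb, hdS⟩ := hdmem d hd
    obtain ⟨h1, h2⟩ := hw.codom d hdb (isDeqS_isDeq hdS) (m d) (hmu d hd)
    rw [hes]; exact List.mem_filter.mpr ⟨h1, h2⟩
  have hinj : ∀ d ∈ ds, ∀ d' ∈ ds, m d = m d' → d = d' := by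
    intro d hd d' hd' hmm
    obtain ⟨hdb, hdS⟩ := hdmem d hd
    obtain ⟨hdb', hdS'⟩ := hdmem d' hd'
    exact hw.inj d hdb d' hdb' (isDeqS_isDeq hdS) (isDeqS_isDeq hdS') (m d)
      (hmu d hd) (hmm ▸ hmu d' hd')
  have hord : ∀ d ∈ ds, ∀ d' ∈ ds, Precedes b d d' → Precedes b (m d) (m d') := by
    intro d hd d' hd' hp
    obtain ⟨hdb, hdS⟩ := hdmem d hd
    obtain ⟨hdb', hdS'⟩ := hdmem d' hd'
    have hmb : m d ∈ b := (hw.codom d hdb (isDeqS_isDeq hdS) (m d) (hmu d hd)).1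
    have hmb' : m d' ∈ b := (hw.codom d' hdb' (isDeqS_isDeq hdS') (m d') (hmu d' hd')).1
    have hne : m d ≠ m d' := by
      intro he
      have := hinj d hd d' hd' he
      subst this
      exact precedes_irrefl hnd hp
    rcases precedes_total hmb hmb' hne with h | h
    · exact h
    · exfalso
      have henq : (m d').isEnq = true :=
        (hw.codom d' hdb' (isDeqS_isDeq hdS') (m d') (hmu d' hd')).2
      obtain ⟨d₀, hd₀b, hd₀d, hd₀mu, hd₀p⟩ :=
        hw.fifo (m d') hmb' henq d hdb (isDeqS_isDeq hdS) (m d) (hmu d hd) h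
      have : d₀ = d' := hw.inj d₀ hd₀b d' hdb' hd₀d (isDeqS_isDeq hdS') (m d')
        hd₀mu (hmu d' hd')
      subst this
      exact precedes_asymm hnd hp hd₀p
  have hdcl : ∀ e₀ ∈ es, ∀ d ∈ ds, Precedes b e₀ (m d) →
      ∃ d₀ ∈ ds, m d₀ = e₀ ∧ Precedes b d₀ d := by
    intro e₀ he₀ d hd hp
    obtain ⟨hdb, hdS⟩ := hdmem d hd
    obtain ⟨he₀b, he₀e⟩ : e₀ ∈ b ∧ e₀.isEnq = true := List.mem_filter.mp he₀
    obtain ⟨d₀, hd₀b, hd₀d, hd₀mu, hd₀p⟩ :=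
      hw.fifo e₀ he₀b he₀e d hdb (isDeqS_isDeq hdS) (m d) (hmu d hd) hp
    have hd₀S : isDeqS d₀ = true := by
      obtain ⟨o, ho⟩ := isDeq_iff.mp hd₀d
      apply isDeqS_iff.mpr
      rcases o with _ | x
      · exfalso
        have : μ d₀ = none := (hw.null d₀ hd₀b hd₀d).mpr ho
        rw [this] at hd₀mu
        cases hd₀mu
      · exact ⟨x, ho⟩
    have hd₀ds : d₀ ∈ ds := List.mem_filter.mpr ⟨hd₀b, hd₀S⟩
    refine ⟨d₀, hd₀ds, ?_, hd₀p⟩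
    have := hmu d₀ hd₀ds
    rw [this] at hd₀mu
    exact Option.some.inj hd₀mu
  have key' : ∀ k, ∀ hk : k < ds.length, es.idxOf (m (ds[k]'hk)) = k := by
    intro k
    induction k using Nat.strong_induction_on with
    | _ k IH =>
      intro hk
      have hdm : ds[k] ∈ ds := List.getElem_mem hk
      have hem : m ds[k] ∈ es := hmem_es _ hdm
      have hφlt : es.idxOf (m ds[k]) < es.length := List.idxOf_lt_length_iff.mpr hem
      rcases lt_trichotomy (es.idxOf (m ds[k])) k with hlt | heq | hgt
      · exfalso
        have hjlt : es.idxOf (m ds[k]) < ds.length := lt_trans hlt hk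
        have hIH := IH _ hlt hjlt
        obtain ⟨hb1, he1⟩ := getElem_of_indexOf_eq (hmem_es _ (List.getElem_mem hjlt)) hIH
        obtain ⟨hb2, he2⟩ := getElem_of_indexOf_eq hem rfl
        have : m (ds[es.idxOf (m ds[k])]'hjlt) = m (ds[k]'hk) := he1.symm.trans he2
        have := hinj _ (List.getElem_mem hjlt) _ hdm this
        have := (List.Nodup.getElem_inj_iff hndds).mp this
        omega
      · exact heq
      · exfalso
        have hkes : k < es.length := lt_trans hgt hφlt
        obtain ⟨_, he2⟩ := getElem_of_indexOf_eq hem rfl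
        have hp : Precedes b (es[k]'hkes) (m ds[k]) := by
          have := precedes_filter QEvent.isEnq hgt hφlt
          rw [he2] at this
          exact this
        obtain ⟨d₀, hd₀ds, hd₀m, hd₀p⟩ := hdcl _ (List.getElem_mem hkes) _ hdm hp
        have hidxk : ds.idxOf ds[k] = k := nodup_indexOf_getElem hndds hk
        have hj₀ : ds.idxOf d₀ < k := by
          have := filter_idx_lt hnd isDeqS hd₀ds hdm hd₀p
          rw [hidxk] at this
          exact this
        have hj₀len : ds.idxOf d₀ < ds.length := List.idxOf_lt_length_iff.mpr hd₀ds
        have hIH := IH _ hj₀ hj₀len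
        obtain ⟨_, hd₀get⟩ := getElem_of_indexOf_eq hd₀ds rfl
        rw [hd₀get] at hIH
        rw [hd₀m] at hIH
        have : es.idxOf (es[k]'hkes) = k := nodup_indexOf_getElem hndes hkes
        omega
  intro k hk
  have h1 := key' k hk
  obtain ⟨hk', he⟩ := getElem_of_indexOf_eq (hmem_es _ (List.getElem_mem hk)) h1
  exact ⟨hk', by rw [hmu _ (List.getElem_mem hk), he]⟩

/-! ### Counting lemma for deq(NULL) positions -/

lemma count_prefix {b t r : Behavior} {d : QEvent} (μ : QEvent → Option QEvent)
    (hw : SeqWitness b μ) (hnd : b.Nodup)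
    (hb : b = t ++ d :: r) (hdn : d.act = QAction.deq none) :
    (t.filter QEvent.isEnq).length = (t.filter isDeqS).length := by
  classical
  have hdb : d ∈ b := by rw [hb]; exact List.mem_append_right _ (List.mem_cons_self)
  have hddeq : d.isDeq = true := isDeq_of_null hdn
  have hμ : μ d = none := (hw.null d hdb hddeq).mpr hdn
  have hcard := hw.empty d hdb hddeq hμ
  have hndt : t.Nodup := by
    rw [hb] at hnd
    exact (List.nodup_append.mp hnd).1
  have hdt : d ∉ t := by
    rw [hb, List.nodup_append] at hnd
    exact fun hm => hnd.2.2 d hm d List.mem_cons_self rfl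
  have hpre : ∀ x, Precedes b x d ↔ x ∈ t := by
    intro x
    constructor
    · intro h
      rw [precedes_iff_decomp] at h
      obtain ⟨t', r', he, hx⟩ := h
      have hdt' : d ∉ t' := by
        rw [he, List.nodup_append] at hnd
        exact fun hm => hnd.2.2 d hm d List.mem_cons_self rfl
      have : t' = t := split_unique (he.symm.trans hb) hdt' hdt
      exact this ▸ hx
    · intro hx
      rw [precedes_iff_decomp]
      exact ⟨t, r, hb, hx⟩
  have hmemb : ∀ x ∈ t, x ∈ b := by
    intro x hx; rw [hb]; exact List.mem_append_left _ hx
  have hs1 : {e : QEvent | e ∈ b ∧ e.isEnq = true ∧ Precedes b e d}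
      = ↑(t.filter QEvent.isEnq).toFinset := by
    ext x
    simp only [Set.mem_setOf_eq, Finset.coe_sort_coe, Finset.mem_coe,
      List.mem_toFinset, List.mem_filter]
    constructor
    · rintro ⟨_, h2, h3⟩
      exact ⟨(hpre x).mp h3, h2⟩
    · rintro ⟨h1, h2⟩
      exact ⟨hmemb x h1, h2, (hpre x).mpr h1⟩
  have hs2 : {d' : QEvent | d' ∈ b ∧ d'.isDeq = true ∧ Precedes b d' d ∧ μ d' ≠ none}
      = ↑(t.filter (fun d' => d'.isDeq && !(decide (μ d' = none)))).toFinset := by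
    ext x
    simp only [Set.mem_setOf_eq, Finset.coe_sort_coe, Finset.mem_coe,
      List.mem_toFinset, List.mem_filter, Bool.and_eq_true, Bool.not_eq_true',
      decide_eq_false_iff_not]
    constructor
    · rintro ⟨_, h2, h3, h4⟩
      exact ⟨(hpre x).mp h3, h2, h4⟩
    · rintro ⟨h1, h2, h3⟩
      exact ⟨hmemb x h1, h2, (hpre x).mpr h1, h3⟩
  rw [hs1, hs2, Set.ncard_coe_finset, Set.ncard_coe_finset,
    List.toFinset_card_of_nodup (hndt.filter _), List.toFinset_card_of_nodup (hndt.filter _)]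
    at hcard
  rw [hcard]
  congr 1
  apply List.filter_congr
  intro x hx
  have hxb : x ∈ b := hmemb x hx
  cases hxd : x.isDeq with
  | false =>
    have h2 : isDeqS x = false := by
      cases h3 : isDeqS x
      · rfl
      · exact absurd (isDeqS_isDeq h3) (by rw [hxd]; simp)
    simp [h2]
  | true =>
    have hnull := hw.null x hxb hxd
    obtain ⟨o, ho⟩ := isDeq_iff.mp hxd
    rcases o with _ | y
    · have h1 : μ x = none := hnull.mpr ho
      rw [h1, isDeqS_of_null ho]
      simp
    · have h1 : isDeqS x = true := isDeqS_iff.mpr ⟨y, ho⟩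
      have h2 : μ x ≠ none := by rw [Ne, hnull, ho]; simp
      rw [h1]
      simp [h2]

/-- A behavior with a sequential witness has an observationally equivalent
canonical behavior with deq(NULL) events at the same positions. -/
theorem seqWitness_canonical (b : Behavior) (μ : QEvent → Option QEvent)
    (hnd : b.Nodup) (hw : SeqWitness b μ) :
    ∃ bc : Behavior, Canonical bc ∧ ObsEquiv b bc ∧
      ∀ i : ℕ, (∃ u, b[i]? = some ⟨u, QAction.deq none⟩) ↔
               (∃ u, bc[i]? = some ⟨u, QAction.deq none⟩) := by
  classical
  set D : Behavior := b.filter QEvent.isDeq with hD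
  set E : Behavior := b.filter QEvent.isEnq with hE
  have AD : ∀ d ∈ D, d.isDeq = true := fun d hd => (List.mem_filter.mp hd).2
  have AE : ∀ e ∈ E, e.isEnq = true := fun e he => (List.mem_filter.mp he).2
  have hds_eq : D.filter isDeqS = b.filter isDeqS := filter_deqS_deq b
  refine ⟨canon D E, ?_, ?_, ?_⟩
  · -- Canonical
    apply canon_canonical D E AD AE
    intro k hk
    have hk2 : k < (b.filter isDeqS).length := by rw [← hds_eq]; exact hk
    obtain ⟨hk', hμk⟩ := key_lemma b μ hnd hw k hk2
    refine ⟨hk', ?_⟩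
    have hge : (D.filter isDeqS)[k]'hk = (b.filter isDeqS)[k]'hk2 := by
      simp only [hds_eq]
    rw [hge]
    have hmem : (b.filter isDeqS)[k]'hk2 ∈ b.filter isDeqS := List.getElem_mem hk2
    obtain ⟨hmb, hmS⟩ := List.mem_filter.mp hmem
    exact hw.val _ hmb (isDeqS_isDeq hmS) _ hμk
  · -- ObsEquiv
    exact ⟨(canon_filter_enq D E AD AE).symm, (canon_filter_deq D E AD AE).symm⟩
  · -- positions of deq(NULL)
    have hperm : List.Perm (canon D E) b := by
      refine (canon_perm D E).trans ?_
      have h1 : E = b.filter (fun x => !QEvent.isDeq x) :=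
        List.filter_congr (fun a _ => isEnq_eq_not_isDeq a)
      rw [h1]
      exact b.filter_append_perm QEvent.isDeq
    have hndc : (canon D E).Nodup := hperm.nodup_iff.mpr hnd
    have fwd : ∀ (i u : ℕ), b[i]? = some ⟨u, QAction.deq none⟩ →
        (canon D E)[i]? = some ⟨u, QAction.deq none⟩ := by
      intro i u hbi
      set d : QEvent := ⟨u, QAction.deq none⟩ with hd
      have hdact : d.act = QAction.deq none := rfl
      obtain ⟨hi, hbi'⟩ := List.getElem?_eq_some_iff.mp hbi
      have hsplit : b = b.take i ++ d :: b.drop (i + 1) := by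
        conv_lhs => rw [← List.take_append_drop i b]
        rw [List.drop_eq_getElem_cons hi, hbi']
      set t : Behavior := b.take i with ht
      have hlt : t.length = i := by rw [ht, List.length_take]; omega
      have hw1 : (t.filter QEvent.isEnq).length = (t.filter isDeqS).length :=
        count_prefix μ hw hnd hsplit hdact
      have hDsplit : D = t.filter QEvent.isDeq ++ d :: (b.drop (i + 1)).filter QEvent.isDeq := by
        rw [hD]
        conv_lhs => rw [hsplit]
        rw [List.filter_append, List.filter_cons_of_pos (by simp [isDeq_of_null hdact])]
      have hcomb : (t.filter QEvent.isDeq).filter isDeqS = t.filter isDeqS :=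
        filter_deqS_deq t
      have hlen : ((t.filter QEvent.isDeq).filter isDeqS).length ≤ E.length := by
        rw [hcomb, ← hw1]
        have hsub : List.Sublist (t.filter QEvent.isEnq) (b.filter QEvent.isEnq) :=
          (List.take_sublist i b).filter _
        rw [hE]
        exact hsub.length_le
      obtain ⟨C, R, hcanon, hC⟩ := canon_split (t.filter QEvent.isDeq) d
        ((b.drop (i + 1)).filter QEvent.isDeq) E
        (fun x hx => (List.mem_filter.mp hx).2) hdact hlen
      have hClen : C.length = i := by
        rw [hC, hcomb, ← hw1, ← hlt]
        have := enq_deq_partition t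
        omega
      rw [hDsplit, hcanon, List.getElem?_append_right (by omega), hClen]
      simp
    intro i
    constructor
    · rintro ⟨u, h⟩
      exact ⟨u, fwd i u h⟩
    · rintro ⟨u, h⟩
      set d : QEvent := ⟨u, QAction.deq none⟩ with hd
      have hdbc : d ∈ canon D E := by
        obtain ⟨hi, hg⟩ := List.getElem?_eq_some_iff.mp h
        exact hg ▸ List.getElem_mem hi
      have hdb : d ∈ b := hperm.mem_iff.mp hdbc
      have hjb : b[b.idxOf d]? = some d := by
        have h1 : b.idxOf d < b.length := List.idxOf_lt_length_iff.mpr hdb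
        rw [List.getElem?_eq_getElem h1, List.getElem_idxOf h1]
      have h2 := fwd (b.idxOf d) u hjb
      have hieq : i = b.idxOf d := by
        obtain ⟨hi, _⟩ := List.getElem?_eq_some_iff.mp h
        exact (List.getElem?_inj hi hndc).mp (h.trans h2.symm)
      exact ⟨u, by rw [hieq]; exact hjb⟩
end

section
/- Let c be a complete history, Match an ordered mapping for c, and d⊥ a dequeue event of c with Match(d⊥)=⊥. Then Bad(c,d⊥) ∩ Before(c,d⊥) = ∅ if and only if there exist a set D of dequeue events of c and a set E of enqueue events of c such that: (D ∪ E) ∩ After(c,d⊥) = ∅; D ∪ E is closed under ≺_c (i.e., if a ∈ D ∪ E and b ≺_c a then b ∈ D ∪ E); and Before(c,d⊥) ∩ Enq(c) ⊆ E ⊆ Match(D). -/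
/-- Invocation and response actions of queue events. -/
inductive HAction : Type
  | invEnq : ℕ → ℕ → HAction
  | resEnq : ℕ → HAction
  | invDeq : ℕ → HAction
  | resDeq : ℕ → Option ℕ → HAction
  deriving DecidableEq

def HAction.uid : HAction → ℕ
  | HAction.invEnq u _ => u
  | HAction.resEnq u => u
  | HAction.invDeq u => u
  | HAction.resDeq u _ => u

def HAction.isInv : HAction → Bool
  | HAction.invEnq _ _ => true
  | HAction.invDeq _ => true
  | _ => false

/-- Whether the action belongs to an enqueue method. -/
def HAction.isEnqM : HAction → Bool
  | HAction.invEnq _ _ => true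
  | HAction.resEnq _ => true
  | _ => false

abbrev History := List HAction

/-- Enqueue events (identified by their uid) invoked in `c`. -/
def EnqSet (c : History) : Set ℕ := {u | ∃ x, HAction.invEnq u x ∈ c}

/-- Dequeue events (identified by their uid) invoked in `c`. -/
def DeqSet (c : History) : Set ℕ := {u | HAction.invDeq u ∈ c}

/-- `u ≺_c u'`: the response of `u` occurs before the invocation of `u'` in `c`. -/
def HPrec (c : History) (u u' : ℕ) : Prop :=
  ∃ (i j : ℕ) (a a' : HAction), i < j ∧ (c)[i]? = some a ∧ a.isInv = false ∧ a.uid = u ∧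
    (c)[j]? = some a' ∧ a'.isInv = true ∧ a'.uid = u'

/-- Event `u` is pending in `c`: invoked but not responded. -/
def Pending (c : History) (u : ℕ) : Prop :=
  (∃ a ∈ c, a.isInv = true ∧ a.uid = u) ∧ ¬(∃ a ∈ c, a.isInv = false ∧ a.uid = u)

/-- A history is complete if it has no pending events. -/
def CompleteH (c : History) : Prop := ∀ u, ¬ Pending c u

/-- Well-formed history: unique invocations and responses per uid, and every
response is preceded by its matching invocation (same uid, same method). -/
structure WellFormed (c : History) : Prop where
  invNodup : ((c.filter (fun a => a.isInv)).map HAction.uid).Nodup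
  resNodup : ((c.filter (fun a => !a.isInv)).map HAction.uid).Nodup
  resMatched : ∀ (j : ℕ) (a' : HAction), (c)[j]? = some a' → a'.isInv = false →
    ∃ (i : ℕ) (a : HAction), i < j ∧ (c)[i]? = some a ∧ a.isInv = true ∧ a.uid = a'.uid ∧ a.isEnqM = a'.isEnqM

/-- A safe mapping for a complete history `c`. -/
structure SafeMapping (c : History) (M : ℕ → Option ℕ) : Prop where
  codom : ∀ d ∈ DeqSet c, ∀ e, M d = some e → e ∈ EnqSet c
  val : ∀ d ∈ DeqSet c, ∀ e, M d = some e →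
        ∃ x, HAction.invEnq e x ∈ c ∧ HAction.resDeq d (some x) ∈ c
  null : ∀ d ∈ DeqSet c, (M d = none ↔ HAction.resDeq d none ∈ c)
  inj : ∀ d ∈ DeqSet c, ∀ d' ∈ DeqSet c, ∀ e, M d = some e → M d' = some e → d = d'

/-- An ordered mapping for a complete history `c`. -/
structure OrderedMapping (c : History) (M : ℕ → Option ℕ)
    extends SafeMapping c M : Prop where
  notAfter : ∀ d ∈ DeqSet c, ∀ e, M d = some e → ¬ HPrec c d e
  fifo : ∀ e ∈ EnqSet c, ∀ d' ∈ DeqSet c, ∀ e', M d' = some e' → HPrec c e e' →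
         ∃ d ∈ DeqSet c, M d = some e ∧ ¬ HPrec c d' d

/-- The least set `Bad(c, d⊥)` of enqueue events. -/
inductive Bad (c : History) (M : ℕ → Option ℕ) (dbot : ℕ) : ℕ → Prop
  | base (e : ℕ) : e ∈ EnqSet c →
      (HPrec c dbot e ∨ ∀ d ∈ DeqSet c, M d = some e → HPrec c dbot d) →
      Bad c M dbot e
  | stepE (ei e : ℕ) : Bad c M dbot ei → e ∈ EnqSet c → HPrec c ei e →
      Bad c M dbot e
  | stepD (ei e d : ℕ) : Bad c M dbot ei → e ∈ EnqSet c → d ∈ DeqSet c →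
      M d = some e → HPrec c ei d → Bad c M dbot e

/-- A linearization witness for a complete history `c`. -/
structure LinWitness (c : History) (M : ℕ → Option ℕ)
    extends OrderedMapping c M : Prop where
  wit : ∀ d ∈ DeqSet c, HAction.resDeq d none ∈ c →
        ∀ e, Bad c M d e → ¬ HPrec c e d


section AuxLemmas

lemma uid_uniq {c : History} {p : HAction → Bool}
    (h : ((c.filter p).map HAction.uid).Nodup)
    {i j : ℕ} {a a' : HAction}
    (hi : (c)[i]? = some a) (hj : (c)[j]? = some a')
    (ha : p a = true) (ha' : p a' = true) (huid : a.uid = a'.uid) : i = j := by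
  have h2 : List.Pairwise
      (fun x y : HAction => p x = true → p y = true → x.uid ≠ y.uid) c := by
    rw [List.Nodup, List.pairwise_map] at h
    exact List.pairwise_filter.mp (by simpa using h)
  rw [List.pairwise_iff_get] at h2
  rw [List.getElem?_eq_some_iff] at hi hj
  obtain ⟨hil, hig⟩ := hi
  obtain ⟨hjl, hjg⟩ := hj
  rcases lt_trichotomy i j with hlt | heq | hgt
  · have h3 := h2 ⟨i, hil⟩ ⟨j, hjl⟩ hlt
    rw [List.get_eq_getElem, List.get_eq_getElem, hig, hjg] at h3
    exact absurd huid (h3 ha ha')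
  · exact heq
  · have h3 := h2 ⟨j, hjl⟩ ⟨i, hil⟩ hgt
    rw [List.get_eq_getElem, List.get_eq_getElem, hig, hjg] at h3
    exact absurd huid.symm (h3 ha' ha)

lemma inv_lt_res {c : History} (hwf : WellFormed c) {i j : ℕ} {v r : HAction}
    (hi : (c)[i]? = some v) (hv : v.isInv = true)
    (hj : (c)[j]? = some r) (hr : r.isInv = false) (hu : v.uid = r.uid) :
    i < j := by
  obtain ⟨k, a, hk, hka, hainv, hau, _⟩ := hwf.resMatched j r hj hr
  have : k = i := uid_uniq hwf.invNodup hka hi hainv hv (by rw [hau, hu])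
  omega

lemma prec_trans {c : History} (hwf : WellFormed c) {a b d : ℕ}
    (h1 : HPrec c a b) (h2 : HPrec c b d) : HPrec c a d := by
  obtain ⟨i, j, ra, ib, hij, hi, hri, hui, hj, hjinv, huj⟩ := h1
  obtain ⟨i', j', rb, idd, hij', hi', hri', hui', hj', hinv', huj'⟩ := h2
  have hlt : j < i' := inv_lt_res hwf hj hjinv hi' hri' (by rw [huj, hui'])
  exact ⟨i, j', ra, idd, by omega, hi, hri, hui, hj', hinv', huj'⟩

lemma prec_antisym {c : History} (hwf : WellFormed c) {a b : ℕ}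
    (h1 : HPrec c a b) (h2 : HPrec c b a) : False := by
  obtain ⟨i, j, ra, ib, hij, hi, hri, hui, hj, hjinv, huj⟩ := h1
  obtain ⟨i', j', rb, ia, hij', hi', hri', hui', hj', hinv', huj'⟩ := h2
  have h3 : j < i' := inv_lt_res hwf hj hjinv hi' hri' (by rw [huj, hui'])
  have h4 : j' < i := inv_lt_res hwf hj' hinv' hi hri (by rw [huj', hui])
  omega

lemma prec_mem {c : History} (hwf : WellFormed c) {b a : ℕ}
    (h : HPrec c b a) : b ∈ EnqSet c ∨ b ∈ DeqSet c := by
  obtain ⟨i, j, r, a', hij, hi, hri, hui, _, _, _⟩ := h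
  obtain ⟨k, v, hk, hkv, hvinv, hvu, hvm⟩ := hwf.resMatched i r hi hri
  have hvmem : v ∈ c := by rw [List.mem_iff_getElem?]; exact ⟨k, hkv⟩
  cases v with
  | invEnq u x =>
      left
      have : u = b := by simpa [HAction.uid] using hvu.trans hui
      subst this
      exact ⟨x, hvmem⟩
  | invDeq u =>
      right
      have : u = b := by simpa [HAction.uid] using hvu.trans hui
      subst this
      exact hvmem
  | resEnq u => simp [HAction.isInv] at hvinv
  | resDeq u o => simp [HAction.isInv] at hvinv

lemma enq_deq_disj {c : History} (hwf : WellFormed c) {u : ℕ}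
    (h1 : u ∈ EnqSet c) (h2 : u ∈ DeqSet c) : False := by
  obtain ⟨x, hx⟩ := h1
  rw [List.mem_iff_getElem?] at hx
  rw [DeqSet, Set.mem_setOf_eq, List.mem_iff_getElem?] at h2
  obtain ⟨i, hi⟩ := hx
  obtain ⟨j, hj⟩ := h2
  have : i = j := uid_uniq hwf.invNodup hi hj rfl rfl rfl
  subst this
  rw [hi] at hj
  simp at hj

lemma bad_enq {c : History} {M : ℕ → Option ℕ} {dbot e : ℕ}
    (h : Bad c M dbot e) : e ∈ EnqSet c := by
  induction h with
  | base e he _ => exact he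
  | stepE ei e _ he _ _ => exact he
  | stepD ei e d _ he _ _ _ _ => exact he

end AuxLemmas

/-- Alternative characterization of `Bad(c,d⊥) ∩ Before(c,d⊥) = ∅` via the
existence of suitable sets of dequeue and enqueue events. -/
theorem alt_lin_witness (c : History) (M : ℕ → Option ℕ) (dbot : ℕ)
    (hwf : WellFormed c) (hcomp : CompleteH c)
    (hM : OrderedMapping c M) (hd : dbot ∈ DeqSet c) (hnull : M dbot = none) :
    (∀ e, Bad c M dbot e → ¬ HPrec c e dbot) ↔
    ∃ D E : Set ℕ, D ⊆ DeqSet c ∧ E ⊆ EnqSet c ∧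
      (∀ u ∈ D ∪ E, ¬ HPrec c dbot u) ∧
      (∀ a ∈ D ∪ E, ∀ b, HPrec c b a → b ∈ D ∪ E) ∧
      (∀ e ∈ EnqSet c, HPrec c e dbot → e ∈ E) ∧
      (∀ e ∈ E, ∃ d ∈ D, M d = some e) := by
  constructor
  · intro hlin
    refine ⟨{d | d ∈ DeqSet c ∧ ¬ HPrec c dbot d ∧
              ∀ e', Bad c M dbot e' → ¬ HPrec c e' d},
            {e | e ∈ EnqSet c ∧ ¬ HPrec c dbot e ∧ ¬ Bad c M dbot e ∧
              ∀ e', Bad c M dbot e' → ¬ HPrec c e' e},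
            fun d hd => hd.1, fun e he => he.1, ?_, ?_, ?_, ?_⟩
    · rintro u (hu | hu)
      · exact hu.2.1
      · exact hu.2.1
    · rintro a (ha | ha) b hba
      · obtain ⟨haD, hna, hprop⟩ := ha
        have hnb : ¬ HPrec c dbot b := fun h => hna (prec_trans hwf h hba)
        have hpropb : ∀ e', Bad c M dbot e' → ¬ HPrec c e' b :=
          fun e' hbad h => hprop e' hbad (prec_trans hwf h hba)
        rcases prec_mem hwf hba with hbe | hbd
        · right
          exact ⟨hbe, hnb, fun hb => hprop b hb hba, hpropb⟩
        · left
          exact ⟨hbd, hnb, hpropb⟩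
      · obtain ⟨haE, hna, hnbad, hprop⟩ := ha
        have hnb : ¬ HPrec c dbot b := fun h => hna (prec_trans hwf h hba)
        have hpropb : ∀ e', Bad c M dbot e' → ¬ HPrec c e' b :=
          fun e' hbad h => hprop e' hbad (prec_trans hwf h hba)
        rcases prec_mem hwf hba with hbe | hbd
        · right
          exact ⟨hbe, hnb, fun hb => hprop b hb hba, hpropb⟩
        · left
          exact ⟨hbd, hnb, hpropb⟩
    · intro e he hprec
      refine ⟨he, fun h => prec_antisym hwf hprec h,
        fun hb => hlin e hb hprec, ?_⟩
      intro e' hbad h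
      exact hlin e' hbad (prec_trans hwf h hprec)
    · rintro e ⟨heE, hne, hnbad, hprop⟩
      have hnb : ¬ (HPrec c dbot e ∨
          ∀ d ∈ DeqSet c, M d = some e → HPrec c dbot d) :=
        fun h => hnbad (Bad.base e heE h)
      push_neg at hnb
      obtain ⟨_, d, hdD, hMd, hnd⟩ := hnb
      refine ⟨d, ⟨hdD, hnd, ?_⟩, hMd⟩
      intro e' hbad h
      exact hnbad (Bad.stepD e' e d hbad heE hdD hMd h)
  · rintro ⟨D, E, hD, hE, hnot, hclosed, hbefore, hmatch⟩ e hbad hprec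
    have key : ∀ e, Bad c M dbot e → e ∉ E := by
      intro e hb
      induction hb with
      | base e he hdisj =>
          intro heE
          rcases hdisj with h | h
          · exact hnot e (Or.inr heE) h
          · obtain ⟨d, hdD, hMd⟩ := hmatch e heE
            exact hnot d (Or.inl hdD) (h d (hD hdD) hMd)
      | stepE ei e hbi he hpr ih =>
          intro heE
          rcases hclosed e (Or.inr heE) ei hpr with hid | hie
          · exact enq_deq_disj hwf (bad_enq hbi) (hD hid)
          · exact ih hie
      | stepD ei e d hbi he hdDeq hMd hpr ih =>
          intro heE
          obtain ⟨d', hd'D, hMd'⟩ := hmatch e heE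
          have hdd : d = d' := hM.inj d hdDeq d' (hD hd'D) e hMd hMd'
          subst hdd
          rcases hclosed d (Or.inl hd'D) ei hpr with hid | hie
          · exact enq_deq_disj hwf (bad_enq hbi) (hD hid)
          · exact ih hie
    exact key e hbad (hbefore e (bad_enq hbad) hprec)
end
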